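/- Let q = p^e with p prime, let 0 ≤ k < e, and let A = F_q[X_1,…,X_ℓ]/⟨t_1(X_1),…,t_ℓ(X_ℓ)⟩ where each t_i(X_i) is a square-free polynomial in F_q[X_i]. Let λ be a unit of A satisfying λ^{p^e} = λ. If C is a λ-constacyclic code of length n over A, then its k-Galois dual C^{⊥k} is a λ^{−p^{e−k}}-constacyclic code of length n over A, i.e. C^{⊥k} is an A-submodule of A^n closed under the map (c_0,…,c_{n−1}) ↦ (λ^{−p^{e−k}} c_{n−1}, c_0,…,c_{n−2}). -/
import Mathlib


set_option synthInstance.maxHeartbeats 1000000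
set_option maxHeartbeats 1000000

/-- The `k`-Galois dual (as a set) of a set of codewords `C ⊆ R^ι`,
with respect to the inner product `⟨u,v⟩ = ∑ i, u i * (v i)^pk`. -/
def galoisDualSet {R : Type*} [CommRing R] {ι : Type*} [Fintype ι]
    (pk : ℕ) (C : Set (ι → R)) : Set (ι → R) :=
  {v | ∀ c ∈ C, ∑ i, c i * v i ^ pk = 0}

/-- The `μ`-constacyclic shift `(c_0, …, c_{n-1}) ↦ (μ c_{n-1}, c_0, …, c_{n-2})`
on `R^n`, with coordinates indexed by `ZMod n`. -/
def constaShift {R : Type*} [CommRing R] {n : ℕ} (μ : R) (c : ZMod n → R) :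
    ZMod n → R :=
  fun i => if i = 0 then μ * c (i - 1) else c (i - 1)

/-- The affine algebra `F[X_1, …, X_ℓ] / ⟨t_1(X_1), …, t_ℓ(X_ℓ)⟩`. -/
abbrev AffineAlgebra {F : Type*} [Field F] {ℓ : ℕ} (t : Fin ℓ → Polynomial F) : Type _ :=
  MvPolynomial (Fin ℓ) F ⧸
    Ideal.span (Set.range fun i => Polynomial.aeval (MvPolynomial.X i : MvPolynomial (Fin ℓ) F) (t i))

lemma constaShift_zero {R : Type*} [CommRing R] {n : ℕ} (μ : R) (c : ZMod n → R) :
    constaShift μ c 0 = μ * c (0 - 1) := if_pos rfl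

lemma constaShift_ne {R : Type*} [CommRing R] {n : ℕ} (μ : R) (c : ZMod n → R)
    (i : ZMod n) (h : i ≠ 0) : constaShift μ c i = c (i - 1) := if_neg h

lemma shift_iterate {R : Type*} [CommRing R] {n : ℕ} [NeZero n] (lam : R) :
    ∀ m, m ≤ n → ∀ c : ZMod n → R,
    (constaShift lam)^[m] c = fun i : ZMod n =>
      if (i : ZMod n).val < m then lam * c (i - m) else c (i - m) := by
  intro m
  induction m with
  | zero => intro _ c; funext i; simp
  | succ m ih =>
    intro hm c
    have hmn : m < n := hm
    rw [Function.iterate_succ_apply, ih (le_of_lt hmn)]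
    funext i
    have hsub : i - (m : ZMod n) = 0 ↔ i.val = m := by
      constructor
      · intro h
        rw [sub_eq_zero.mp h, ZMod.val_natCast_of_lt hmn]
      · intro h
        have : i = (m : ZMod n) := by rw [← ZMod.natCast_rightInverse i, h]
        rw [this]; ring
    have harg : i - ((m : ZMod n) + 1) = i - m - 1 := by ring
    by_cases h1 : i.val < m
    · have hne : i - (m : ZMod n) ≠ 0 := by
        intro h; rw [hsub.mp h] at h1; omega
      simp only [if_pos h1, constaShift, if_neg hne]
      rw [if_pos (by omega : i.val < m + 1)]
      congr 1
      push_cast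
      ring
    · by_cases h2 : i.val = m
      · have hz : i - (m : ZMod n) = 0 := hsub.mpr h2
        simp only [if_neg h1, constaShift, if_pos hz]
        rw [if_pos (by omega : i.val < m + 1)]
        congr 1
        push_cast
        ring
      · have hne : i - (m : ZMod n) ≠ 0 := fun h => h2 (hsub.mp h)
        simp only [if_neg h1, constaShift, if_neg hne]
        rw [if_neg (by omega : ¬ i.val < m + 1)]
        congr 1
        push_cast
        ring

lemma shift_iterate_n {R : Type*} [CommRing R] {n : ℕ} [NeZero n] (lam : R)
    (c : ZMod n → R) :
    constaShift lam ((constaShift lam)^[n-1] c) = fun i => lam * c i := by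
  have h1 : (constaShift lam)^[n] c = fun i => lam * c i := by
    rw [shift_iterate lam n le_rfl]
    funext i
    rw [if_pos (ZMod.val_lt i)]
    congr 2
    simp
  have hn : n - 1 + 1 = n := Nat.sub_add_cancel (Nat.one_le_iff_ne_zero.mpr (NeZero.ne n))
  rw [← Function.iterate_succ_apply' (constaShift lam) (n-1) c, show (n-1).succ = n from by omega, h1]

theorem stmt0 {p e k ℓ n : ℕ} (hp : p.Prime) (he : 0 < e) (hk : k < e) [NeZero n]
    {F : Type*} [Field F] [Fintype F] (hcard : Fintype.card F = p ^ e)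
    (t : Fin ℓ → Polynomial F) (ht : ∀ i, Squarefree (t i))
    (lam : (AffineAlgebra t)ˣ) (hlam : (lam : AffineAlgebra t) ^ p ^ e = lam)
    (C : Submodule (AffineAlgebra t) (ZMod n → AffineAlgebra t))
    (hC : ∀ c ∈ C, constaShift (lam : AffineAlgebra t) c ∈ C) :
    ∃ D : Submodule (AffineAlgebra t) (ZMod n → AffineAlgebra t),
      (D : Set (ZMod n → AffineAlgebra t)) =
          galoisDualSet (p ^ k) (C : Set (ZMod n → AffineAlgebra t)) ∧
        ∀ x ∈ D,
          constaShift (((lam⁻¹ : (AffineAlgebra t)ˣ) : AffineAlgebra t) ^ p ^ (e - k)) x ∈ D := by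
  set A := AffineAlgebra t with hA
  by_cases htriv : (1 : A) = 0
  · haveI : Subsingleton A := subsingleton_of_zero_eq_one htriv.symm
    refine ⟨⊤, ?_, fun x _ => trivial⟩
    ext v
    simp only [Submodule.top_coe, Set.mem_univ, true_iff, galoisDualSet, Set.mem_setOf_eq]
    intro c hc
    exact Subsingleton.elim _ _
  haveI : Nontrivial A := nontrivial_of_ne 1 0 htriv
  haveI hfp : Fact p.Prime := ⟨hp⟩
  -- characteristic of F is p
  have hcharF : CharP F p := by
    obtain ⟨p', hc⟩ := CharP.exists F
    haveI := hc
    obtain ⟨m, hp', hcard'⟩ := FiniteField.card F p'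
    have hpp' : p = p' := by
      have hdvd : p ∣ p' ^ (m : ℕ) := by
        rw [← hcard', hcard]
        exact dvd_pow_self p he.ne'
      exact (Nat.prime_dvd_prime_iff_eq hp hp').mp (hp.dvd_of_dvd_pow hdvd)
    rwa [hpp']
  haveI := hcharF
  haveI hcharA : CharP A p :=
    charP_of_injective_algebraMap (algebraMap F A).injective p
  -- basic facts about lam
  have hinv : ((lam⁻¹ : Aˣ) : A) ^ p ^ e = ((lam⁻¹ : Aˣ) : A) := by
    have h2 : ((lam : A)) ^ p ^ e * ((lam⁻¹ : Aˣ) : A) = 1 := by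
      rw [hlam]; exact lam.mul_inv
    calc ((lam⁻¹ : Aˣ) : A) ^ p ^ e
        = ((lam⁻¹ : Aˣ) : A) ^ p ^ e * (((lam : A)) ^ p ^ e * ((lam⁻¹ : Aˣ) : A)) := by
          rw [h2, mul_one]
      _ = (((lam⁻¹ : Aˣ) : A) * (lam : A)) ^ p ^ e * ((lam⁻¹ : Aˣ) : A) := by
          rw [mul_pow]; ring
      _ = ((lam⁻¹ : Aˣ) : A) := by rw [lam.inv_mul, one_pow, one_mul]
  have hmu : (((lam⁻¹ : Aˣ) : A) ^ p ^ (e - k)) ^ p ^ k = ((lam⁻¹ : Aˣ) : A) := by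
    rw [← pow_mul, ← pow_add, Nat.sub_add_cancel hk.le, hinv]
  -- the dual set is a submodule
  have hzero : (0 : ZMod n → A) ∈ galoisDualSet (p ^ k) (C : Set (ZMod n → A)) := by
    intro c hc
    simp [zero_pow (pow_ne_zero k hp.ne_zero)]
  have hadd : ∀ {v w : ZMod n → A}, v ∈ galoisDualSet (p ^ k) (C : Set (ZMod n → A)) →
      w ∈ galoisDualSet (p ^ k) (C : Set (ZMod n → A)) →
      v + w ∈ galoisDualSet (p ^ k) (C : Set (ZMod n → A)) := by
    intro v w hv hw c hc
    have : ∀ i : ZMod n, c i * (v + w) i ^ p ^ k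
        = c i * v i ^ p ^ k + c i * w i ^ p ^ k := by
      intro i
      rw [Pi.add_apply, add_pow_char_pow, mul_add]
    calc ∑ i, c i * (v + w) i ^ p ^ k
        = ∑ i, (c i * v i ^ p ^ k + c i * w i ^ p ^ k) :=
          Finset.sum_congr rfl fun i _ => this i
      _ = (∑ i, c i * v i ^ p ^ k) + ∑ i, c i * w i ^ p ^ k := Finset.sum_add_distrib
      _ = 0 := by rw [hv c hc, hw c hc, add_zero]
  have hsmul : ∀ (a : A) {v : ZMod n → A},
      v ∈ galoisDualSet (p ^ k) (C : Set (ZMod n → A)) →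
      a • v ∈ galoisDualSet (p ^ k) (C : Set (ZMod n → A)) := by
    intro a v hv c hc
    calc ∑ i, c i * (a • v) i ^ p ^ k
        = a ^ p ^ k * ∑ i, c i * v i ^ p ^ k := by
          rw [Finset.mul_sum]
          refine Finset.sum_congr rfl fun i _ => ?_
          rw [Pi.smul_apply, smul_eq_mul, mul_pow]; ring
      _ = 0 := by rw [hv c hc, mul_zero]
  refine ⟨{ carrier := galoisDualSet (p ^ k) (C : Set (ZMod n → A)),
            zero_mem' := hzero, add_mem' := hadd, smul_mem' := hsmul }, rfl, ?_⟩
  -- closure under the shift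
  intro x hx
  have hx' : ∀ c ∈ C, ∑ i, c i * x i ^ p ^ k = 0 := hx
  intro c hc
  have hiterC : ∀ m, ∀ c ∈ C, (constaShift (lam : A))^[m] c ∈ C := by
    intro m
    induction m with
    | zero => intro c hc; exact hc
    | succ m ih =>
      intro c hc
      rw [Function.iterate_succ_apply]
      exact ih _ (hC c hc)
  set d := (constaShift (lam : A))^[n-1] c with hd
  have hdC : d ∈ C := hiterC _ c hc
  have hshift : constaShift (lam : A) d = fun i => (lam : A) * c i :=
    shift_iterate_n (lam : A) c
  -- coordinates of d
  have hdm1 : d (0 - 1) = c 0 := by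
    have h0 : (lam : A) * d (0 - 1) = (lam : A) * c 0 := by
      have h := congrFun hshift 0
      rwa [constaShift_zero] at h
    calc d (0 - 1) = ((lam⁻¹ : Aˣ) : A) * ((lam : A) * d (0 - 1)) := by
          rw [← mul_assoc, lam.inv_mul, one_mul]
      _ = ((lam⁻¹ : Aˣ) : A) * ((lam : A) * c 0) := by rw [h0]
      _ = c 0 := by rw [← mul_assoc, lam.inv_mul, one_mul]
  have hdne : ∀ i : ZMod n, i ≠ 0 → d (i - 1) = (lam : A) * c i := by
    intro i hi
    have h := congrFun hshift i
    rwa [constaShift_ne _ _ i hi] at h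
  -- key termwise identity
  set μ : A := ((lam⁻¹ : Aˣ) : A) ^ p ^ (e - k) with hμ
  have key : ∀ i : ZMod n,
      (lam : A) * (c i * (constaShift μ x i) ^ p ^ k) = d (i - 1) * x (i - 1) ^ p ^ k := by
    intro i
    by_cases hi : i = 0
    · subst hi
      rw [constaShift_zero, mul_pow, hμ, hmu, hdm1]
      calc (lam : A) * (c 0 * (((lam⁻¹ : Aˣ) : A) * x (0 - 1) ^ p ^ k))
          = ((lam : A) * ((lam⁻¹ : Aˣ) : A)) * (c 0 * x (0 - 1) ^ p ^ k) := by ring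
        _ = c 0 * x (0 - 1) ^ p ^ k := by rw [lam.mul_inv, one_mul]
    · rw [constaShift_ne _ _ i hi, hdne i hi]
      ring
  -- conclude
  have hsum : (lam : A) * (∑ i, c i * (constaShift μ x i) ^ p ^ k) = 0 := by
    rw [Finset.mul_sum]
    calc ∑ i, (lam : A) * (c i * (constaShift μ x i) ^ p ^ k)
        = ∑ i, d (i - 1) * x (i - 1) ^ p ^ k :=
          Finset.sum_congr rfl fun i _ => key i
      _ = ∑ i, d i * x i ^ p ^ k :=
          Fintype.sum_equiv (Equiv.subRight (1 : ZMod n)) _ _ fun i => rfl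
      _ = 0 := hx' d hdC
  calc ∑ i, c i * (constaShift μ x i) ^ p ^ k
      = ((lam⁻¹ : Aˣ) : A) * ((lam : A) * ∑ i, c i * (constaShift μ x i) ^ p ^ k) := by
        rw [← mul_assoc, lam.inv_mul, one_mul]
    _ = 0 := by rw [hsum, mul_zero]
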